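/- arXiv:2202.03397 — 2 statements merged into one kernel-verified Lean document; each statement's English description precedes it below -/
import Mathlib

section
/- Under the assumptions: ‖∂₁Φ(w,λ)‖ ≤ q < 1; ∂₁Φ(·,λ) is ν₁-Lipschitz and E₁ := ∇₁E(·,λ) is μ₁-Lipschitz in w; ‖∇₁E(w(λ),λ)‖ ≤ L_E; define v(w,λ) := (I − ∂₁Φ(w,λ)ᵀ)⁻¹ ∇₁E(w,λ) and let w(λ) be the fixed point of Φ(·,λ). Then for every w ∈ ℝ^d, ‖v(w(λ),λ) − v(w,λ)‖ ≤ (ν₁ L_E/(1−q)² + μ₁/(1−q)) ‖w(λ) − w‖. -/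
noncomputable section
set_option maxHeartbeats 1000000

/-- Lipschitz bound for the linear-system solution `v(w,λ) = (I − ∂₁Φ(w,λ)ᵀ)⁻¹ ∇₁E(w,λ)`:
`‖v(w(λ),λ) − v(w,λ)‖ ≤ (ν₁ L_E/(1−q)² + μ₁/(1−q)) ‖w(λ) − w‖`. -/
theorem stmt10 {d m : ℕ} (Λ : Set (EuclideanSpace ℝ (Fin m)))
    (D₁Φ : EuclideanSpace ℝ (Fin d) → EuclideanSpace ℝ (Fin m) →
      (EuclideanSpace ℝ (Fin d) →L[ℝ] EuclideanSpace ℝ (Fin d)))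
    (gradE : EuclideanSpace ℝ (Fin d) → EuclideanSpace ℝ (Fin m) → EuclideanSpace ℝ (Fin d))
    (q ν₁ μ₁ L_E : ℝ) (hq : q < 1)
    (hcontr : ∀ wv lv, ‖D₁Φ wv lv‖ ≤ q)
    (hν₁ : ∀ lv ∈ Λ, ∀ w₁ w₂, ‖D₁Φ w₁ lv - D₁Φ w₂ lv‖ ≤ ν₁ * ‖w₁ - w₂‖)
    (hμ₁ : ∀ lv ∈ Λ, ∀ w₁ w₂, ‖gradE w₁ lv - gradE w₂ lv‖ ≤ μ₁ * ‖w₁ - w₂‖)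
    (w : EuclideanSpace ℝ (Fin m) → EuclideanSpace ℝ (Fin d))
    (hLE : ∀ lv ∈ Λ, ‖gradE (w lv) lv‖ ≤ L_E)
    (inv : EuclideanSpace ℝ (Fin d) → EuclideanSpace ℝ (Fin m) →
      (EuclideanSpace ℝ (Fin d) →L[ℝ] EuclideanSpace ℝ (Fin d)))
    (hinv : ∀ wv lv,
      (1 - ContinuousLinearMap.adjoint (D₁Φ wv lv)) * inv wv lv = 1 ∧
      inv wv lv * (1 - ContinuousLinearMap.adjoint (D₁Φ wv lv)) = 1)
    (v : EuclideanSpace ℝ (Fin d) → EuclideanSpace ℝ (Fin m) → EuclideanSpace ℝ (Fin d))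
    (hv : ∀ wv lv, v wv lv = inv wv lv (gradE wv lv)) :
    ∀ lv ∈ Λ, ∀ wv : EuclideanSpace ℝ (Fin d),
      ‖v (w lv) lv - v wv lv‖
        ≤ (ν₁ * L_E / (1 - q) ^ 2 + μ₁ / (1 - q)) * ‖w lv - wv‖ := by
  intro lv hlv wv
  have hq0 : 0 ≤ q := le_trans (norm_nonneg _) (hcontr (w lv) lv)
  have h1q : 0 < 1 - q := by linarith
  -- bound on inv
  have hinv_norm : ∀ u, ‖inv u lv‖ ≤ 1 / (1 - q) := by
    intro u
    have h := (hinv u lv).2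
    have hC : inv u lv = 1 + inv u lv * ContinuousLinearMap.adjoint (D₁Φ u lv) := by
      rw [mul_sub, mul_one] at h
      exact eq_add_of_sub_eq h
    have hT : ‖ContinuousLinearMap.adjoint (D₁Φ u lv)‖ ≤ q := by
      rw [LinearIsometryEquiv.norm_map]; exact hcontr u lv
    have : ‖inv u lv‖ ≤ 1 + ‖inv u lv‖ * q := by
      calc ‖inv u lv‖ = ‖(1 : _ →L[ℝ] _) + inv u lv * ContinuousLinearMap.adjoint (D₁Φ u lv)‖ := by
            rw [← hC]
        _ ≤ ‖(1 : EuclideanSpace ℝ (Fin d) →L[ℝ] EuclideanSpace ℝ (Fin d))‖ + ‖inv u lv * ContinuousLinearMap.adjoint (D₁Φ u lv)‖ := norm_add_le _ _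
        _ ≤ 1 + ‖inv u lv‖ * q :=
            add_le_add ContinuousLinearMap.norm_id_le
              (le_trans (ContinuousLinearMap.opNorm_comp_le _ _)
                (mul_le_mul_of_nonneg_left hT (norm_nonneg _)))
    rw [le_div_iff₀ h1q]; nlinarith [norm_nonneg (inv u lv)]
  set A := inv (w lv) lv
  set B := inv wv lv
  have hAB : A - B = A * (ContinuousLinearMap.adjoint (D₁Φ (w lv) lv)
      - ContinuousLinearMap.adjoint (D₁Φ wv lv)) * B := by
    have h1 := (hinv (w lv) lv).2
    have h2 := (hinv wv lv).1
    calc A - B = A * ((1 - ContinuousLinearMap.adjoint (D₁Φ wv lv)) * B)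
        - (A * (1 - ContinuousLinearMap.adjoint (D₁Φ (w lv) lv))) * B := by
          rw [h1, h2]; simp [mul_assoc]
      _ = A * (ContinuousLinearMap.adjoint (D₁Φ (w lv) lv)
          - ContinuousLinearMap.adjoint (D₁Φ wv lv)) * B := by
          simp only [mul_sub, sub_mul, mul_one, one_mul, mul_assoc]
          abel
  have hdiff : ‖ContinuousLinearMap.adjoint (D₁Φ (w lv) lv)
      - ContinuousLinearMap.adjoint (D₁Φ wv lv)‖ ≤ ν₁ * ‖w lv - wv‖ := by
    rw [← map_sub, LinearIsometryEquiv.norm_map]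
    exact hν₁ lv hlv _ _
  have hνX : 0 ≤ ν₁ * ‖w lv - wv‖ := le_trans (norm_nonneg _) hdiff
  have hμX : 0 ≤ μ₁ * ‖w lv - wv‖ := le_trans (norm_nonneg _) (hμ₁ lv hlv (w lv) wv)
  have hABnorm : ‖A - B‖ ≤ (1/(1-q)) * (ν₁ * ‖w lv - wv‖) * (1/(1-q)) := by
    rw [hAB]
    calc ‖A * (ContinuousLinearMap.adjoint (D₁Φ (w lv) lv)
          - ContinuousLinearMap.adjoint (D₁Φ wv lv)) * B‖
        ≤ ‖A * (ContinuousLinearMap.adjoint (D₁Φ (w lv) lv)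
          - ContinuousLinearMap.adjoint (D₁Φ wv lv))‖ * ‖B‖ :=
          ContinuousLinearMap.opNorm_comp_le _ _
      _ ≤ (‖A‖ * ‖ContinuousLinearMap.adjoint (D₁Φ (w lv) lv)
          - ContinuousLinearMap.adjoint (D₁Φ wv lv)‖) * ‖B‖ := by
          gcongr; exact ContinuousLinearMap.opNorm_comp_le _ _
      _ ≤ (1/(1-q)) * (ν₁ * ‖w lv - wv‖) * (1/(1-q)) :=
          mul_le_mul (mul_le_mul (hinv_norm _) hdiff (norm_nonneg _) (by positivity))
            (hinv_norm _) (norm_nonneg _)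
            (mul_nonneg (by positivity) hνX)
  have key : v (w lv) lv - v wv lv
      = (A - B) (gradE (w lv) lv) + B (gradE (w lv) lv - gradE wv lv) := by
    rw [hv, hv]
    simp only [map_sub, ContinuousLinearMap.sub_apply]
    abel
  have hgnorm : (0:ℝ) ≤ L_E := le_trans (norm_nonneg _) (hLE lv hlv)
  calc ‖v (w lv) lv - v wv lv‖
      ≤ ‖(A - B) (gradE (w lv) lv)‖ + ‖B (gradE (w lv) lv - gradE wv lv)‖ := by
        rw [key]; exact norm_add_le _ _
    _ ≤ ‖A - B‖ * ‖gradE (w lv) lv‖ + ‖B‖ * ‖gradE (w lv) lv - gradE wv lv‖ := by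
        gcongr <;> exact ContinuousLinearMap.le_opNorm _ _
    _ ≤ ((1/(1-q)) * (ν₁ * ‖w lv - wv‖) * (1/(1-q))) * L_E
        + (1/(1-q)) * (μ₁ * ‖w lv - wv‖) :=
        add_le_add
          (mul_le_mul hABnorm (hLE lv hlv) (norm_nonneg _)
            (mul_nonneg (mul_nonneg (by positivity) hνX) (by positivity)))
          (mul_le_mul (hinv_norm _) (hμ₁ lv hlv _ _) (norm_nonneg _) (by positivity))
    _ = (ν₁ * L_E / (1 - q) ^ 2 + μ₁ / (1 - q)) * ‖w lv - wv‖ := by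
        field_simp
end
end

section
/- Let f : Λ → ℝ be L-smooth on a closed convex set Λ ⊆ ℝ^m (i.e., ∇f is L-Lipschitz on Λ), with f bounded below. Consider the projected inexact gradient iteration λ_{s+1} = P_Λ(λ_s − α g_s) with step size 0 < α ≤ 1/L, where g_s ∈ ℝ^m is arbitrary, and set δ_s := ‖∇f(λ_s) − g_s‖, Δ_f := f(λ_0) − inf_λ f(λ), and G_α(λ) := α⁻¹(λ − P_Λ(λ − α∇f(λ))). Then for every S ≥ 1, (1/S) Σ_{s=0}^{S−1} ‖G_α(λ_s)‖² ≤ (1/(Sα)) [8Δ_f + (10/L) Σ_{s=0}^{S−1} δ_s²]. -/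
open scoped BigOperators

noncomputable section

open scoped RealInnerProductSpace

/-- Descent lemma: if the gradient is `L`-Lipschitz on a convex set `s`, then
`f y ≤ f x + ⟪∇f x, y - x⟫ + L/2 ‖y - x‖²` for `x, y ∈ s`. -/
lemma descent_lemma {E : Type*} [NormedAddCommGroup E] [InnerProductSpace ℝ E]
    [CompleteSpace E]
    (f : E → ℝ) (f' : E → E) (hgrad : ∀ x, HasGradientAt f (f' x) x)
    (s : Set E) (hconv : Convex ℝ s) (L : ℝ) (hL : 0 ≤ L)
    (hlip : ∀ x ∈ s, ∀ y ∈ s, ‖f' x - f' y‖ ≤ L * ‖x - y‖)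
    {x y : E} (hx : x ∈ s) (hy : y ∈ s) :
    f y ≤ f x + ⟪f' x, y - x⟫ + L / 2 * ‖y - x‖ ^ 2 := by
  set d := y - x with hd
  have hc : ∀ t : ℝ, HasDerivAt (fun t : ℝ => x + t • d) d t := by
    intro t
    simpa using ((hasDerivAt_id t).smul_const d).const_add x
  have hcomp : ∀ t : ℝ, HasDerivAt (fun t : ℝ => f (x + t • d)) ⟪f' (x + t • d), d⟫ t := by
    intro t
    have h1 : HasFDerivAt f (InnerProductSpace.toDual ℝ E (f' (x + t • d))) (x + t • d) :=
      hasGradientAt_iff_hasFDerivAt.mp (hgrad _)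
    simpa [Function.comp_def] using h1.comp_hasDerivAt t (hc t)
  set q : ℝ → ℝ := fun t => f (x + t • d) - t * ⟪f' x, d⟫ - L / 2 * t ^ 2 * ‖d‖ ^ 2 with hqdef
  have hq : ∀ t, HasDerivAt q (⟪f' (x + t • d), d⟫ - ⟪f' x, d⟫ - L * t * ‖d‖ ^ 2) t := by
    intro t
    have h2 : HasDerivAt (fun t : ℝ => t * ⟪f' x, d⟫) ⟪f' x, d⟫ t := by
      simpa using (hasDerivAt_id t).mul_const ⟪f' x, d⟫
    have h3 : HasDerivAt (fun t : ℝ => L / 2 * t ^ 2 * ‖d‖ ^ 2) (L * t * ‖d‖ ^ 2) t := by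
      have h4 := ((hasDerivAt_pow 2 t).const_mul (L / 2)).mul_const (‖d‖ ^ 2)
      exact h4.congr_deriv (by push_cast; ring)
    exact ((hcomp t).sub h2).sub h3
  have mono : AntitoneOn q (Set.Icc 0 1) := by
    apply antitoneOn_of_deriv_nonpos (convex_Icc 0 1)
    · exact fun t _ => (hq t).continuousAt.continuousWithinAt
    · exact fun t _ => (hq t).differentiableAt.differentiableWithinAt
    · intro t ht
      rw [interior_Icc] at ht
      rw [(hq t).deriv]
      have hts : x + t • d ∈ s := by
        have hmem := hconv hx hy (by linarith [ht.2] : (0:ℝ) ≤ 1 - t) ht.1.le (by ring)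
        have : x + t • d = (1 - t) • x + t • y := by
          rw [hd]; module
        rw [this]; exact hmem
      have hCS : ⟪f' (x + t • d) - f' x, d⟫ ≤ ‖f' (x + t • d) - f' x‖ * ‖d‖ :=
        real_inner_le_norm _ _
      have hlip' := hlip _ hts _ hx
      have hnorm : ‖x + t • d - x‖ = t * ‖d‖ := by
        rw [add_sub_cancel_left, norm_smul, Real.norm_eq_abs, abs_of_pos ht.1]
      rw [hnorm] at hlip'
      have hsplit : ⟪f' (x + t • d), d⟫ - ⟪f' x, d⟫ = ⟪f' (x + t • d) - f' x, d⟫ :=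
        (inner_sub_left _ _ _).symm
      nlinarith [norm_nonneg d, norm_nonneg (f' (x + t • d) - f' x), ht.1.le,
        mul_nonneg (mul_nonneg hL ht.1.le) (norm_nonneg d)]
  have hfin : q 1 ≤ q 0 := mono (Set.left_mem_Icc.2 zero_le_one)
    (Set.right_mem_Icc.2 zero_le_one) zero_le_one
  have hq0 : q 0 = f x := by simp [hqdef]
  have hq1 : q 1 = f y - ⟪f' x, d⟫ - L / 2 * ‖d‖ ^ 2 := by
    simp [hqdef, hd]
  rw [hq0, hq1] at hfin
  linarith

/-- Variational inequality for the metric projection. -/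
lemma proj_inner_le {E : Type*} [NormedAddCommGroup E] [InnerProductSpace ℝ E]
    (Λ : Set E) (hΛconv : Convex ℝ Λ)
    (P : E → E) (hP : ∀ x, P x ∈ Λ ∧ ∀ y ∈ Λ, ‖x - P x‖ ≤ ‖x - y‖)
    (u : E) {y : E} (hy : y ∈ Λ) : ⟪u - P u, y - P u⟫ ≤ 0 := by
  haveI : Nonempty ↥Λ := ⟨⟨P u, (hP u).1⟩⟩
  have heq : ‖u - P u‖ = ⨅ w : Λ, ‖u - (w : E)‖ := by
    refine le_antisymm (le_ciInf fun w => (hP u).2 w w.2) ?_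
    exact ciInf_le ⟨0, by rintro b ⟨w, rfl⟩; exact norm_nonneg _⟩ (⟨P u, (hP u).1⟩ : Λ)
  exact ((norm_eq_iInf_iff_real_inner_le_zero hΛconv (hP u).1).mp heq) y hy

/-- The metric projection is nonexpansive. -/
lemma proj_nonexpansive {E : Type*} [NormedAddCommGroup E] [InnerProductSpace ℝ E]
    (Λ : Set E) (hΛconv : Convex ℝ Λ)
    (P : E → E) (hP : ∀ x, P x ∈ Λ ∧ ∀ y ∈ Λ, ‖x - P x‖ ≤ ‖x - y‖)
    (u v : E) : ‖P u - P v‖ ≤ ‖u - v‖ := by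
  have h1 : ⟪u - P u, P v - P u⟫ ≤ 0 := proj_inner_le Λ hΛconv P hP u (hP v).1
  have h2 : ⟪v - P v, P u - P v⟫ ≤ 0 := proj_inner_le Λ hΛconv P hP v (hP u).1
  have expand : ⟪u - v, P u - P v⟫ =
      -⟪u - P u, P v - P u⟫ - ⟪v - P v, P u - P v⟫ + ‖P u - P v‖ ^ 2 := by
    rw [← real_inner_self_eq_norm_sq]
    simp only [inner_sub_left, inner_sub_right]
    ring
  have hkey : ‖P u - P v‖ ^ 2 ≤ ⟪u - v, P u - P v⟫ := by linarith
  have hCS : ⟪u - v, P u - P v⟫ ≤ ‖u - v‖ * ‖P u - P v‖ := real_inner_le_norm _ _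
  nlinarith [norm_nonneg (P u - P v), norm_nonneg (u - v)]

set_option maxHeartbeats 1600000 in
/-- Projected inexact gradient descent with `α ≤ 1/L` on an `L`-smooth function bounded
below: `(1/S) Σ ‖G_α(λ_s)‖² ≤ (1/(Sα)) [8Δ_f + (10/L) Σ δ_s²]`. -/
theorem stmt13 {m : ℕ} (Λ : Set (EuclideanSpace ℝ (Fin m)))
    (hΛne : Λ.Nonempty) (hΛc : IsClosed Λ) (hΛconv : Convex ℝ Λ)
    (f : EuclideanSpace ℝ (Fin m) → ℝ)
    (f' : EuclideanSpace ℝ (Fin m) → EuclideanSpace ℝ (Fin m))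
    (hgrad : ∀ x, HasGradientAt f (f' x) x)
    (L : NNReal) (hL : (0 : ℝ) < L) (hsmooth : LipschitzOnWith L f' Λ)
    (hbdd : BddBelow (Set.range f))
    (P : EuclideanSpace ℝ (Fin m) → EuclideanSpace ℝ (Fin m))
    (hP : ∀ x, P x ∈ Λ ∧ ∀ y ∈ Λ, ‖x - P x‖ ≤ ‖x - y‖)
    (α : ℝ) (hα0 : 0 < α) (hα : α ≤ 1 / L)
    (lam g : ℕ → EuclideanSpace ℝ (Fin m))
    (hlam0 : lam 0 ∈ Λ)
    (hrec : ∀ s, lam (s + 1) = P (lam s - α • g s)) :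
    ∀ S : ℕ, 1 ≤ S →
      (1 / (S : ℝ)) * ∑ s ∈ Finset.range S,
          ‖(α)⁻¹ • (lam s - P (lam s - α • f' (lam s)))‖ ^ 2
        ≤ (1 / ((S : ℝ) * α)) *
            (8 * (f (lam 0) - ⨅ x, f x)
              + (10 / L) * ∑ s ∈ Finset.range S, ‖f' (lam s) - g s‖ ^ 2) := by
  intro S hS
  have hαL : α * L ≤ 1 := by
    rw [le_div_iff₀ hL] at hα; linarith
  have hmem : ∀ s, lam s ∈ Λ := by
    intro s
    induction s with
    | zero => exact hlam0
    | succ n ih => rw [hrec]; exact (hP _).1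
  have hlipΛ : ∀ x ∈ Λ, ∀ y ∈ Λ, ‖f' x - f' y‖ ≤ (L : ℝ) * ‖x - y‖ := by
    intro x hx y hy
    have := hsmooth.dist_le_mul x hx y hy
    simpa [dist_eq_norm] using this
  -- per-step function decrease (multiplied through by 4α to avoid divisions)
  have step : ∀ s, ‖lam (s + 1) - lam s‖ ^ 2
      ≤ 4 * α * (f (lam s) - f (lam (s + 1))) + 4 * α ^ 2 * ‖f' (lam s) - g s‖ ^ 2 := by
    intro s
    set d := lam (s + 1) - lam s with hd
    set δ := ‖f' (lam s) - g s‖ with hδ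
    have hdesc := descent_lemma f f' hgrad Λ hΛconv (L : ℝ) hL.le hlipΛ
      (hmem s) (hmem (s + 1))
    rw [← hd] at hdesc
    -- projection inequality: α ⟪g s, d⟫ ≤ -‖d‖²
    have hproj : α * ⟪(g s : EuclideanSpace ℝ (Fin m)), d⟫ ≤ -‖d‖ ^ 2 := by
      have h0 : ⟪lam s - α • g s - lam (s + 1), lam s - lam (s + 1)⟫ ≤ 0 := by
        have := proj_inner_le Λ hΛconv P hP (lam s - α • g s) (hmem s)
        rwa [← hrec s] at this
      have hrw : lam s - α • g s - lam (s + 1) = -d - α • g s := by rw [hd]; abel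
      have hrw2 : lam s - lam (s + 1) = -d := by rw [hd]; abel
      rw [hrw, hrw2] at h0
      have hexp : ⟪-d - α • g s, -d⟫
          = ‖d‖ ^ 2 + α * ⟪(g s : EuclideanSpace ℝ (Fin m)), d⟫ := by
        simp only [inner_sub_left, inner_neg_left, inner_neg_right,
          real_inner_smul_left, real_inner_self_eq_norm_sq]
        ring
      rw [hexp] at h0
      linarith
    have h1 : α * f (lam (s + 1))
        ≤ α * (f (lam s) + ⟪f' (lam s), d⟫ + (L : ℝ) / 2 * ‖d‖ ^ 2) :=
      mul_le_mul_of_nonneg_left hdesc hα0.le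
    have hCS : ⟪f' (lam s) - g s, d⟫ ≤ δ * ‖d‖ := real_inner_le_norm _ _
    have h2 : α * ⟪f' (lam s) - g s, d⟫ ≤ α * (δ * ‖d‖) :=
      mul_le_mul_of_nonneg_left hCS hα0.le
    have h4 : α * (L : ℝ) * ‖d‖ ^ 2 ≤ ‖d‖ ^ 2 := by
      nlinarith [sq_nonneg ‖d‖, hαL]
    have h5 : α * δ * ‖d‖ ≤ α ^ 2 * δ ^ 2 + ‖d‖ ^ 2 / 4 := by
      nlinarith [sq_nonneg (‖d‖ - 2 * α * δ)]
    have hsplit : α * ⟪f' (lam s), d⟫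
        = α * ⟪f' (lam s) - g s, d⟫ + α * ⟪(g s : EuclideanSpace ℝ (Fin m)), d⟫ := by
      rw [inner_sub_left]; ring
    nlinarith [h1, h2, h4, h5, hsplit, hproj]
  -- bound on the gradient mapping
  have Gbound : ∀ s, ‖(α)⁻¹ • (lam s - P (lam s - α • f' (lam s)))‖ ^ 2
      ≤ 2 * (α⁻¹) ^ 2 * ‖lam (s + 1) - lam s‖ ^ 2 + 2 * ‖f' (lam s) - g s‖ ^ 2 := by
    intro s
    set δ := ‖f' (lam s) - g s‖ with hδ
    set v := lam s - P (lam s - α • f' (lam s)) with hv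
    have hne := proj_nonexpansive Λ hΛconv P hP (lam s - α • f' (lam s)) (lam s - α • g s)
    have hdiff : (lam s - α • f' (lam s)) - (lam s - α • g s) = α • (g s - f' (lam s)) := by
      rw [smul_sub]; abel
    rw [hdiff, norm_smul, Real.norm_eq_abs, abs_of_pos hα0,
      norm_sub_rev (g s) (f' (lam s)), ← hδ] at hne
    have htri : ‖v‖ ≤ ‖lam (s + 1) - lam s‖ + α * δ := by
      have hsplit2 : v = (lam s - lam (s + 1))
          + (lam (s + 1) - P (lam s - α • f' (lam s))) := by rw [hv]; abel
      have h2 : ‖lam (s + 1) - P (lam s - α • f' (lam s))‖ ≤ α * δ := by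
        rw [hrec s, norm_sub_rev]; exact hne
      calc ‖v‖ ≤ ‖lam s - lam (s + 1)‖ + ‖lam (s + 1) - P (lam s - α • f' (lam s))‖ := by
            rw [hsplit2]; exact norm_add_le _ _
        _ ≤ ‖lam (s + 1) - lam s‖ + α * δ := by rw [norm_sub_rev]; linarith
    have hinv : α⁻¹ * α = 1 := inv_mul_cancel₀ hα0.ne'
    have hinvnn : (0:ℝ) ≤ α⁻¹ := (inv_pos.mpr hα0).le
    have h1 : α⁻¹ * ‖v‖ ≤ α⁻¹ * ‖lam (s + 1) - lam s‖ + δ := by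
      have h2 := mul_le_mul_of_nonneg_left htri hinvnn
      have h3 : α⁻¹ * (‖lam (s + 1) - lam s‖ + α * δ)
          = α⁻¹ * ‖lam (s + 1) - lam s‖ + (α⁻¹ * α) * δ := by ring
      rw [h3, hinv, one_mul] at h2
      exact h2
    rw [norm_smul, Real.norm_eq_abs, abs_of_pos (inv_pos.mpr hα0)]
    have hδnn : (0:ℝ) ≤ δ := norm_nonneg _
    nlinarith [h1, sq_nonneg (α⁻¹ * ‖lam (s + 1) - lam s‖ - δ),
      mul_nonneg hinvnn (norm_nonneg (v : EuclideanSpace ℝ (Fin m))),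
      mul_nonneg (mul_nonneg hinvnn (norm_nonneg (lam (s + 1) - lam s))) hδnn]
  -- summation
  set B := ∑ s ∈ Finset.range S, ‖f' (lam s) - g s‖ ^ 2 with hB
  set D := ∑ s ∈ Finset.range S, ‖lam (s + 1) - lam s‖ ^ 2 with hD
  set A := ∑ s ∈ Finset.range S, ‖(α)⁻¹ • (lam s - P (lam s - α • f' (lam s)))‖ ^ 2 with hA
  have hBnn : (0:ℝ) ≤ B := Finset.sum_nonneg fun _ _ => sq_nonneg _
  have hDsum : D ≤ 4 * α * (f (lam 0) - f (lam S)) + 4 * α ^ 2 * B := by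
    calc D ≤ ∑ s ∈ Finset.range S, (4 * α * (f (lam s) - f (lam (s + 1)))
          + 4 * α ^ 2 * ‖f' (lam s) - g s‖ ^ 2) := Finset.sum_le_sum fun s _ => step s
      _ = 4 * α * (∑ s ∈ Finset.range S, (f (lam s) - f (lam (s + 1))))
          + 4 * α ^ 2 * B := by
        rw [Finset.sum_add_distrib, ← Finset.mul_sum, ← Finset.mul_sum]
      _ = 4 * α * (f (lam 0) - f (lam S)) + 4 * α ^ 2 * B := by
        rw [Finset.sum_range_sub' (fun s => f (lam s)) S]
  have hAsum : A ≤ 2 * (α⁻¹) ^ 2 * D + 2 * B := by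
    calc A ≤ ∑ s ∈ Finset.range S, (2 * (α⁻¹) ^ 2 * ‖lam (s + 1) - lam s‖ ^ 2
          + 2 * ‖f' (lam s) - g s‖ ^ 2) := Finset.sum_le_sum fun s _ => Gbound s
      _ = 2 * (α⁻¹) ^ 2 * D + 2 * B := by
        rw [Finset.sum_add_distrib, ← Finset.mul_sum, ← Finset.mul_sum]
  clear_value A B D
  set Δ := f (lam 0) - ⨅ x, f x with hΔ
  clear_value Δ
  have hfS : f (lam 0) - f (lam S) ≤ Δ := by
    have := ciInf_le hbdd (lam S)
    rw [hΔ]; linarith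
  have hfin : A ≤ (1 / α) * (8 * Δ + (10 / (L : ℝ)) * B) := by
    have h6 : D ≤ 4 * α * Δ + 4 * α ^ 2 * B := by
      have hx : 4 * α * (f (lam 0) - f (lam S)) ≤ 4 * α * Δ :=
        mul_le_mul_of_nonneg_left hfS (by linarith)
      linarith [hDsum]
    have h7 : 2 * (α⁻¹) ^ 2 * D ≤ 2 * (α⁻¹) ^ 2 * (4 * α * Δ + 4 * α ^ 2 * B) :=
      mul_le_mul_of_nonneg_left h6 (by positivity)
    have hinv : α⁻¹ * α = 1 := inv_mul_cancel₀ hα0.ne'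
    have h8 : 2 * (α⁻¹) ^ 2 * (4 * α * Δ + 4 * α ^ 2 * B) = 8 / α * Δ + 8 * B := by
      rw [div_eq_mul_inv]
      linear_combination (8 * α⁻¹ * Δ + 8 * B * (α⁻¹ * α + 1)) * hinv
    have h9 : 10 * B ≤ 10 * B / ((L : ℝ) * α) := by
      rw [le_div_iff₀ (mul_pos hL hα0)]
      have hy : 10 * B * (α * (L : ℝ)) ≤ 10 * B * 1 :=
        mul_le_mul_of_nonneg_left hαL (by linarith)
      calc 10 * B * ((L : ℝ) * α) = 10 * B * (α * (L : ℝ)) := by ring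
        _ ≤ 10 * B * 1 := hy
        _ = 10 * B := by ring
    have h10 : (1 / α) * (8 * Δ + (10 / (L : ℝ)) * B) = 8 / α * Δ + 10 * B / ((L : ℝ) * α) := by
      simp only [div_eq_mul_inv, one_div, mul_inv]
      ring
    rw [h10]
    linarith [hAsum, h7]
  have hS0 : (0:ℝ) < (S : ℝ) := by
    have : (0:ℕ) < S := hS
    exact_mod_cast this
  calc (1 / (S : ℝ)) * A ≤ (1 / (S : ℝ)) * ((1 / α) * (8 * Δ + (10 / (L : ℝ)) * B)) :=
        mul_le_mul_of_nonneg_left hfin (by positivity)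
    _ = (1 / ((S : ℝ) * α)) * (8 * Δ + (10 / (L : ℝ)) * B) := by
        simp only [one_div, mul_inv]; ring
end
end
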